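/- arXiv:math/0601443 — 2 statements merged into one kernel-verified Lean document; each statement's English description precedes it below -/
import Mathlib

section
/- Let V be a linear subspace of ℝ^m that contains no nonzero vector all of whose coordinates are nonnegative. Then for every vector c ∈ ℝ^m, the set of lattice points p ∈ V ∩ ℤ^m satisfying p ≥ c (coordinatewise) is finite. -/
/-- If a linear subspace `V ⊆ ℝ^m` contains no nonzero vector all of
whose coordinates are nonnegative, then for every `c ∈ ℝ^m` the set of lattice points
`p ∈ V ∩ ℤ^m` with `p ≥ c` coordinatewise is finite. -/
theorem finite_lattice_points_of_no_nonneg_vector (m : ℕ)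
    (V : Submodule ℝ (Fin m → ℝ))
    (hV : ∀ v ∈ V, (∀ i, 0 ≤ v i) → v = 0) (c : Fin m → ℝ) :
    {p : Fin m → ℤ | (fun i => (p i : ℝ)) ∈ V ∧ ∀ i, c i ≤ (p i : ℝ)}.Finite := by
  rcases Nat.eq_zero_or_pos m with hm | hm
  · subst hm; exact Set.toFinite _
  have : Nonempty (Fin m) := Fin.pos_iff_nonempty.mp hm
  have hne : (Finset.univ : Finset (Fin m)).Nonempty := Finset.univ_nonempty
  -- Key claim: the real solution set is norm-bounded.
  have key : ∃ R : ℝ, ∀ v ∈ V, (∀ i, c i ≤ v i) → ‖v‖ ≤ R := by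
    set K : Set (Fin m → ℝ) := Metric.sphere 0 1 ∩ (V : Set (Fin m → ℝ)) with hK
    rcases K.eq_empty_or_nonempty with hKe | hKne
    · -- then V = ⊥
      refine ⟨0, fun v hv hvc => ?_⟩
      by_contra h
      have hv0 : v ≠ 0 := by intro h0; simp [h0] at h
      have : (‖v‖⁻¹ • v) ∈ K := by
        constructor
        · simp [norm_smul, norm_ne_zero_iff.mpr hv0, abs_of_nonneg (inv_nonneg.mpr (norm_nonneg v)),
            inv_mul_cancel₀ (norm_ne_zero_iff.mpr hv0)]
        · exact V.smul_mem _ hv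
      rw [hKe] at this; exact this
    · have hKc : IsCompact K :=
        (isCompact_sphere 0 1).inter_right (Submodule.closed_of_finiteDimensional V)
      have hfcont : Continuous fun v : Fin m → ℝ => Finset.univ.inf' hne (fun i => v i) :=
        Continuous.finset_inf'_apply hne (fun i _ => continuous_apply i)
      obtain ⟨v₀, hv₀K, hv₀max⟩ := hKc.exists_isMaxOn hKne hfcont.continuousOn
      set ε : ℝ := -(Finset.univ.inf' hne (fun i => v₀ i)) with hε
      have hεpos : 0 < ε := by
        have hv₀0 : v₀ ≠ 0 := by
          intro h0
          have := hv₀K.1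
          simp [h0] at this
        have : ¬ ∀ i, 0 ≤ v₀ i := fun h => hv₀0 (hV v₀ hv₀K.2 h)
        push_neg at this
        obtain ⟨i, hi⟩ := this
        have : Finset.univ.inf' hne (fun i => v₀ i) ≤ v₀ i :=
          Finset.inf'_le _ (Finset.mem_univ i)
        simp only [hε, neg_pos]
        linarith
      refine ⟨max 0 ((Finset.univ.sup' hne (fun i => -c i)) / ε), fun v hv hvc => ?_⟩
      rcases eq_or_ne v 0 with rfl | hv0
      · simp
      · have hvn : (0:ℝ) < ‖v‖ := norm_pos_iff.mpr hv0
        have hu : (‖v‖⁻¹ • v) ∈ K := by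
          constructor
          · simp [norm_smul, abs_of_nonneg (inv_nonneg.mpr (norm_nonneg v)),
              inv_mul_cancel₀ hvn.ne']
          · exact V.smul_mem _ hv
        have hle : Finset.univ.inf' hne (fun i => (‖v‖⁻¹ • v) i) ≤ -ε := by
          have := hv₀max hu
          simp only [Set.mem_setOf_eq] at this
          simpa [hε] using this
        obtain ⟨i, -, hieq⟩ := Finset.exists_mem_eq_inf' hne (fun i => (‖v‖⁻¹ • v) i)
        have h1 : ‖v‖⁻¹ * v i ≤ -ε := by
          have := hieq ▸ hle
          simpa [Pi.smul_apply, smul_eq_mul] using this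
        have h2 : v i ≤ -ε * ‖v‖ := by
          have := mul_le_mul_of_nonneg_right h1 hvn.le
          rwa [inv_mul_eq_div, div_mul_cancel₀ _ hvn.ne'] at this
        have h3 : ε * ‖v‖ ≤ -c i := by nlinarith [hvc i]
        have h4 : -c i ≤ Finset.univ.sup' hne (fun i => -c i) :=
          Finset.le_sup' (fun i => -c i) (Finset.mem_univ i)
        have : ‖v‖ ≤ (Finset.univ.sup' hne (fun i => -c i)) / ε := by
          rw [le_div_iff₀ hεpos]; linarith
        exact le_max_of_le_right this
  obtain ⟨R, hR⟩ := key
  -- every lattice point in the set lies in an integer box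
  have hsub : {p : Fin m → ℤ | (fun i => (p i : ℝ)) ∈ V ∧ ∀ i, c i ≤ (p i : ℝ)} ⊆
      Set.Icc (fun _ => -⌈R⌉) (fun _ => ⌈R⌉) := by
    rintro p ⟨hpV, hpc⟩
    have hnorm : ‖(fun i => (p i : ℝ))‖ ≤ R := hR _ hpV hpc
    have habs : ∀ i, |(p i : ℝ)| ≤ R := by
      intro i
      have h := norm_le_pi_norm (fun i => (p i : ℝ)) i
      rw [Real.norm_eq_abs] at h
      linarith
    constructor <;> intro i
    · have : (-⌈R⌉ : ℝ) ≤ (p i : ℝ) := by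
        have := habs i
        have hRc : R ≤ (⌈R⌉ : ℝ) := Int.le_ceil R
        rw [abs_le] at this
        linarith
      exact_mod_cast this
    · have : ((p i : ℝ)) ≤ (⌈R⌉ : ℝ) := by
        have := habs i
        have hRc : R ≤ (⌈R⌉ : ℝ) := Int.le_ceil R
        rw [abs_le] at this
        linarith
      exact_mod_cast this
  exact (Set.finite_Icc _ _).subset hsub
end

section
/- Let V be a linear subspace of ℝ^m. If there exists a sequence (p_j) in V ∩ ℤ^m with all p_j bounded below coordinatewise by a fixed vector and ‖p_j‖ → ∞, then V contains a nonzero vector with all coordinates nonnegative, and hence V contains a nonzero integer vector with all coordinates nonnegative. -/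
/-- Let `V` be the ℝ-span of a set of integer vectors in `ℝ^m`.  If there
is a sequence of lattice points of `V`, bounded below coordinatewise by a fixed vector `c`,
whose norms tend to infinity, then `V` contains a nonzero vector with all coordinates
nonnegative, and hence a nonzero *integer* vector with all coordinates nonnegative. -/
theorem exists_nonneg_vector_of_unbounded_bounded_below (m : ℕ)
    (S : Set (Fin m → ℤ))
    (V : Submodule ℝ (Fin m → ℝ))
    (hV : V = Submodule.span ℝ ((fun q : Fin m → ℤ => fun i => (q i : ℝ)) '' S))
    (p : ℕ → Fin m → ℤ)
    (hmem : ∀ j, (fun i => (p j i : ℝ)) ∈ V)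
    (c : Fin m → ℝ)
    (hbd : ∀ j i, c i ≤ (p j i : ℝ))
    (hnorm : Filter.Tendsto (fun j => ‖((fun i => (p j i : ℝ)) : Fin m → ℝ)‖)
      Filter.atTop Filter.atTop) :
    (∃ v ∈ V, v ≠ 0 ∧ ∀ i, 0 ≤ v i) ∧
      ∃ q : Fin m → ℤ, (fun i => (q i : ℝ)) ∈ V ∧ q ≠ 0 ∧ ∀ i, 0 ≤ q i := by
  -- Shift the sequence to land in ℕ^m and apply Dickson's lemma (`Pi.isPWO`).
  set f : ℕ → Fin m → ℕ := fun j i => (p j i - ⌈c i⌉).toNat with hf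
  have hshift : ∀ j i, p j i = (f j i : ℤ) + ⌈c i⌉ := by
    intro j i
    have h1 : ⌈c i⌉ ≤ p j i := Int.ceil_le.2 (hbd j i)
    simp [hf, Int.toNat_of_nonneg (sub_nonneg.2 h1)]
  have hpwo : (Set.univ : Set (Fin m → ℕ)).IsPWO :=
    Set.isPWO_of_wellQuasiOrderedLE _
  obtain ⟨g, hg⟩ := hpwo.exists_monotone_subseq (f := f)
    (fun _ => Set.mem_univ _)
  -- find k with ‖p (g k)‖ > ‖p (g 0)‖
  obtain ⟨N, hN⟩ := (Filter.tendsto_atTop.1 hnorm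
    (‖((fun i => (p (g 0) i : ℝ)) : Fin m → ℝ)‖ + 1)).exists_forall_of_atTop
  have hgN : N ≤ g N := g.strictMono.le_apply
  have hne : p (g 0) ≠ p (g N) := by
    intro h
    have := hN (g N) hgN
    rw [← h] at this
    linarith
  have hle : ∀ i, f (g 0) i ≤ f (g N) i := by
    exact hg (Nat.zero_le N)
  -- the integer vector
  set q : Fin m → ℤ := fun i => p (g N) i - p (g 0) i with hq
  have hq0 : q ≠ 0 := by
    intro h
    apply hne
    funext i
    have := congrFun h i
    simp [hq, sub_eq_zero] at this
    exact this.symm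
  have hqnn : ∀ i, 0 ≤ q i := by
    intro i
    have := hle i
    have h2 := hshift (g N) i
    have h3 := hshift (g 0) i
    simp only [hq]
    omega
  have hqmem : ((fun i => (q i : ℝ)) : Fin m → ℝ) ∈ V := by
    have : ((fun i => (q i : ℝ)) : Fin m → ℝ)
        = (fun i => (p (g N) i : ℝ)) - (fun i => (p (g 0) i : ℝ)) := by
      funext i; simp [hq]
    rw [this]
    exact sub_mem (hmem _) (hmem _)
  refine ⟨⟨fun i => (q i : ℝ), hqmem, ?_, fun i => by simpa using (Int.cast_nonneg (hqnn i) : (0:ℝ) ≤ (q i : ℝ))⟩, q, hqmem, hq0, hqnn⟩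
  intro h
  apply hq0
  funext i
  have h2 : ((q i : ℝ)) = 0 := by simpa using congrFun h i
  exact_mod_cast h2
end
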